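/- (Decay of the (0,0)-component of a null form in the semi-hyperboloidal frame.) Let P^{αβ} (α,β ∈ {0,1,2}) be a symmetric constant matrix satisfying the null condition: P^{αβ}ξ_αξ_β = 0 for every ξ ∈ ℝ³ with ξ₀² = ξ₁² + ξ₂². Define on K the function P̲⁰⁰(t,x) := P^{00} − 2(x^a/t)P^{0a} + (x^a x^b/t²)P^{ab}. Then for every pair of multi-indices (I,J) there exists a constant C = C(I,J,P) > 0 such that for all (t,x) ∈ K: |∂^I L^J P̲⁰⁰(t,x)| ≤ C (s/t)²; in particular |P̲⁰⁰(t,x)| ≤ C (s/t)² = C(t²−r²)/t². -/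

import Mathlib

noncomputable section

open Real MeasureTheory

abbrev Pt := ℝ × ℝ × ℝ

def tc (p : Pt) : ℝ := p.1

def rad (p : Pt) : ℝ := Real.sqrt (p.2.1 ^ 2 + p.2.2 ^ 2)

def sv (p : Pt) : ℝ := Real.sqrt (tc p ^ 2 - rad p ^ 2)

def dir (α : Fin 3) : Pt := if α = 0 then (1, 0, 0) else if α = 1 then (0, 1, 0) else (0, 0, 1)

def xc (a : Fin 2) (p : Pt) : ℝ := if a = 0 then p.2.1 else p.2.2

def pd (α : Fin 3) (u : Pt → ℝ) : Pt → ℝ := fun p => fderiv ℝ u p (dir α)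

def Lb (a : Fin 2) (u : Pt → ℝ) : Pt → ℝ := fun p => xc a p * pd 0 u p + tc p * pd a.succ u p

def pdu (a : Fin 2) (u : Pt → ℝ) : Pt → ℝ := fun p => (xc a p / tc p) * pd 0 u p + pd a.succ u p

def Box (u : Pt → ℝ) : Pt → ℝ := fun p => pd 0 (pd 0 u) p - pd 1 (pd 1 u) p - pd 2 (pd 2 u) p

def Kset : Set Pt := {p | rad p + 1 < tc p}

def Kslab (s0 s1 : ℝ) : Set Pt :=
  {p | p ∈ Kset ∧ Real.sqrt (s0 ^ 2 + rad p ^ 2) ≤ tc p ∧ tc p ≤ Real.sqrt (s1 ^ 2 + rad p ^ 2)}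

def Hyp (σ : ℝ) : Set Pt := {p | tc p = Real.sqrt (σ ^ 2 + rad p ^ 2)}

def L2H (σ : ℝ) (u : Pt → ℝ) : ℝ :=
  Real.sqrt (∫ y : ℝ × ℝ, (u (Real.sqrt (σ ^ 2 + y.1 ^ 2 + y.2 ^ 2), y)) ^ 2)

def pdI : List (Fin 3) → (Pt → ℝ) → Pt → ℝ
  | [], u => u
  | α :: I, u => pd α (pdI I u)

def LbJ : List (Fin 2) → (Pt → ℝ) → Pt → ℝ
  | [], u => u
  | a :: J, u => Lb a (LbJ J u)

/-- The `(0,0)`-component of the quadratic form `P` in the semi-hyperboloidal frame: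
`P̲⁰⁰ = P⁰⁰ − 2(x^a/t)P^{0a} + (x^a x^b/t²)P^{ab}`. -/
def nullP00 (P : Fin 3 → Fin 3 → ℝ) : Pt → ℝ :=
  fun p => P 0 0 - (∑ a : Fin 2, 2 * (xc a p / tc p) * P 0 a.succ)
    + ∑ a : Fin 2, ∑ b : Fin 2, (xc a p * xc b p / tc p ^ 2) * P a.succ b.succ

namespace NullAux

def mono (i j k : ℕ) : Pt → ℝ := fun p => p.2.1 ^ i * p.2.2 ^ j / p.1 ^ k

lemma mono_eq (i j k : ℕ) :
    mono i j k = fun p : Pt => p.2.1 ^ i * p.2.2 ^ j * (p.1 ^ k)⁻¹ := by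
  funext p; rw [mono, div_eq_mul_inv]

def ctL : Pt →L[ℝ] ℝ := ContinuousLinearMap.fst ℝ ℝ (ℝ × ℝ)
def cx1L : Pt →L[ℝ] ℝ :=
  (ContinuousLinearMap.fst ℝ ℝ ℝ).comp (ContinuousLinearMap.snd ℝ ℝ (ℝ × ℝ))
def cx2L : Pt →L[ℝ] ℝ :=
  (ContinuousLinearMap.snd ℝ ℝ ℝ).comp (ContinuousLinearMap.snd ℝ ℝ (ℝ × ℝ))

lemma hasF_t {p : Pt} : HasFDerivAt (fun q : Pt => q.1) ctL p := hasFDerivAt_fst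

lemma hasF_x1 {p : Pt} : HasFDerivAt (fun q : Pt => q.2.1) cx1L p :=
  (hasFDerivAt_fst (p := p.2)).comp p hasFDerivAt_snd

lemma hasF_x2 {p : Pt} : HasFDerivAt (fun q : Pt => q.2.2) cx2L p :=
  (hasFDerivAt_snd (p := p.2)).comp p hasFDerivAt_snd

lemma monoHasF (i j k : ℕ) {p : Pt} (hp : p.1 ≠ 0) :
    HasFDerivAt (mono i j k)
      ((p.2.1 ^ i * p.2.2 ^ j) • ((-((p.1 ^ k) ^ 2)⁻¹) • (((k : ℝ) * p.1 ^ (k - 1)) • ctL)) +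
        (p.1 ^ k)⁻¹ •
          ((p.2.1 ^ i) • (((j : ℝ) * p.2.2 ^ (j - 1)) • cx2L) +
            (p.2.2 ^ j) • (((i : ℝ) * p.2.1 ^ (i - 1)) • cx1L))) p := by
  rw [mono_eq]
  exact (((hasDerivAt_pow i p.2.1).comp_hasFDerivAt p hasF_x1).mul
      ((hasDerivAt_pow j p.2.2).comp_hasFDerivAt p hasF_x2)).mul
      ((hasDerivAt_inv (pow_ne_zero k hp)).comp_hasFDerivAt p
        ((hasDerivAt_pow k p.1).comp_hasFDerivAt p hasF_t))

lemma mono_diff (i j k : ℕ) {p : Pt} (hp : p.1 ≠ 0) :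
    DifferentiableAt ℝ (mono i j k) p := (monoHasF i j k hp).differentiableAt

lemma pd0_mono (i j k : ℕ) {p : Pt} (hp : p.1 ≠ 0) :
    pd 0 (mono i j k) p = -(k : ℝ) * mono i j (k + 1) p := by
  have H := monoHasF i j k hp
  simp only [pd, H.fderiv]
  have hd : dir 0 = ((1 : ℝ), (0 : ℝ), (0 : ℝ)) := rfl
  rw [hd]
  simp only [ContinuousLinearMap.add_apply, ContinuousLinearMap.smul_apply, smul_eq_mul,
    ctL, cx1L, cx2L, ContinuousLinearMap.coe_comp', Function.comp_apply,
    ContinuousLinearMap.coe_fst', ContinuousLinearMap.coe_snd']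
  cases k with
  | zero => simp [mono]
  | succ k' =>
    simp only [mono, Nat.add_sub_cancel]
    field_simp
    ring

lemma pd1_mono (i j k : ℕ) {p : Pt} (hp : p.1 ≠ 0) :
    pd 1 (mono i j k) p = (i : ℝ) * mono (i - 1) j k p := by
  have H := monoHasF i j k hp
  simp only [pd, H.fderiv]
  have hd : dir 1 = ((0 : ℝ), (1 : ℝ), (0 : ℝ)) := rfl
  rw [hd]
  simp only [ContinuousLinearMap.add_apply, ContinuousLinearMap.smul_apply, smul_eq_mul,
    ctL, cx1L, cx2L, ContinuousLinearMap.coe_comp', Function.comp_apply,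
    ContinuousLinearMap.coe_fst', ContinuousLinearMap.coe_snd']
  simp only [mono]
  ring

lemma pd2_mono (i j k : ℕ) {p : Pt} (hp : p.1 ≠ 0) :
    pd 2 (mono i j k) p = (j : ℝ) * mono i (j - 1) k p := by
  have H := monoHasF i j k hp
  simp only [pd, H.fderiv]
  have hd : dir 2 = ((0 : ℝ), (0 : ℝ), (1 : ℝ)) := rfl
  rw [hd]
  simp only [ContinuousLinearMap.add_apply, ContinuousLinearMap.smul_apply, smul_eq_mul,
    ctL, cx1L, cx2L, ContinuousLinearMap.coe_comp', Function.comp_apply,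
    ContinuousLinearMap.coe_fst', ContinuousLinearMap.coe_snd']
  simp only [mono]
  ring



inductive Good : ℕ → (Pt → ℝ) → Prop
  | zero (n : ℕ) : Good n (fun _ => 0)
  | add {n : ℕ} {h₁ h₂ : Pt → ℝ} : Good n h₁ → Good n h₂ →
      Good n (fun p => h₁ p + h₂ p)
  | smul {n : ℕ} {h : Pt → ℝ} (c : ℝ) : Good n h → Good n (fun p => c * h p)
  | ofMono {n : ℕ} (i j k : ℕ) (hk : i + j + n ≤ k) : Good n (mono i j k)
  | congr {n : ℕ} {h h' : Pt → ℝ} : Good n h → (∀ p : Pt, p.1 ≠ 0 → h p = h' p) →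
      Good n h'

lemma isOpenU : IsOpen {q : Pt | q.1 ≠ 0} := isOpen_ne.preimage continuous_fst

lemma Good.diff {n : ℕ} {h : Pt → ℝ} (hh : Good n h) :
    ∀ p : Pt, p.1 ≠ 0 → DifferentiableAt ℝ h p := by
  induction hh with
  | zero => intro p _; exact differentiableAt_const 0
  | add hg₁ hg₂ ih₁ ih₂ => intro p hp; exact (ih₁ p hp).add (ih₂ p hp)
  | smul c hh ih => intro p hp; exact (ih p hp).const_mul c
  | ofMono i j k hk => intro p hp; exact mono_diff i j k hp
  | congr hh he ih =>
    intro p hp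
    exact (ih p hp).congr_of_eventuallyEq
      (Filter.eventuallyEq_of_mem (isOpenU.mem_nhds hp) fun q hq => (he q hq).symm)

lemma pd_congrU {h h' : Pt → ℝ} (he : ∀ q : Pt, q.1 ≠ 0 → h q = h' q)
    {p : Pt} (hp : p.1 ≠ 0) (α : Fin 3) : pd α h p = pd α h' p := by
  simp only [pd]
  rw [Filter.EventuallyEq.fderiv_eq
    (Filter.eventuallyEq_of_mem (isOpenU.mem_nhds hp) fun q hq => he q hq)]

lemma Good.pd {n : ℕ} {h : Pt → ℝ} (hh : Good n h) (α : Fin 3) :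
    Good (n + 1) (pd α h) := by
  induction hh with
  | zero =>
    refine Good.congr (Good.zero (n + 1)) fun p hp => ?_
    simp [_root_.pd, fderiv_const]
  | add hg₁ hg₂ ih₁ ih₂ =>
    refine Good.congr (Good.add ih₁ ih₂) fun p hp => ?_
    simp only [_root_.pd]
    rw [fderiv_fun_add (hg₁.diff p hp) (hg₂.diff p hp)]
    simp
  | smul c hg ih =>
    refine Good.congr (Good.smul c ih) fun p hp => ?_
    simp only [_root_.pd]
    rw [fderiv_const_mul (hg.diff p hp) c]
    simp
  | ofMono i j k hk =>
    fin_cases α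
    · refine Good.congr (Good.smul (-(k : ℝ)) (Good.ofMono i j (k + 1) (by omega)))
        fun p hp => ?_
      exact (pd0_mono i j k hp).symm
    · cases i with
      | zero =>
        refine Good.congr (Good.zero (n + 1)) fun p hp => ?_
        exact ((pd1_mono 0 j k hp).trans (by norm_num)).symm
      | succ i' =>
        refine Good.congr (Good.smul ((i' + 1 : ℕ) : ℝ) (Good.ofMono i' j k (by omega)))
          fun p hp => ?_
        exact (pd1_mono (i' + 1) j k hp).symm
    · cases j with
      | zero =>
        refine Good.congr (Good.zero (n + 1)) fun p hp => ?_
        exact ((pd2_mono i 0 k hp).trans (by norm_num)).symm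
      | succ j' =>
        refine Good.congr (Good.smul ((j' + 1 : ℕ) : ℝ) (Good.ofMono i j' k (by omega)))
          fun p hp => ?_
        exact (pd2_mono i (j' + 1) k hp).symm
  | congr hh he ih =>
    exact Good.congr ih fun p hp => pd_congrU he hp α

lemma Good.mul_aux {n m : ℕ} (φ : Pt → ℝ)
    (hφ : ∀ i j k : ℕ, i + j + n ≤ k → Good m (fun p => φ p * mono i j k p)) :
    ∀ {h : Pt → ℝ}, Good n h → Good m (fun p => φ p * h p) := by
  intro h hh
  induction hh with
  | zero => exact Good.congr (Good.zero m) fun p _ => by simp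
  | add hg₁ hg₂ ih₁ ih₂ => exact Good.congr (Good.add ih₁ ih₂) fun p _ => by ring
  | smul c hg ih => exact Good.congr (Good.smul c ih) fun p _ => by ring
  | ofMono i j k hk => exact hφ i j k hk
  | congr hg he ih => exact Good.congr ih fun p hp => by rw [he p hp]

lemma Good.mul_x {n : ℕ} {h : Pt → ℝ} (a : Fin 2) (hh : Good (n + 1) h) :
    Good n (fun p => xc a p * h p) := by
  refine Good.mul_aux (xc a) (fun i j k hk => ?_) hh
  fin_cases a
  · have e : (fun p : Pt => xc 0 p * mono i j k p) = mono (i + 1) j k := by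
      funext p; simp [xc, mono]; ring
    exact e ▸ Good.ofMono (i + 1) j k (by omega)
  · have e : (fun p : Pt => xc 1 p * mono i j k p) = mono i (j + 1) k := by
      funext p; simp [xc, mono]; ring
    exact e ▸ Good.ofMono i (j + 1) k (by omega)

lemma Good.mul_t {n : ℕ} {h : Pt → ℝ} (hh : Good (n + 1) h) :
    Good n (fun p => tc p * h p) := by
  refine Good.mul_aux tc (fun i j k hk => ?_) hh
  obtain ⟨k', rfl⟩ : ∃ k', k = k' + 1 := ⟨k - 1, by omega⟩
  refine Good.congr (Good.ofMono i j k' (by omega)) fun p hp => ?_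
  simp only [mono, tc, pow_succ]
  field_simp

lemma Good.mul_u {n : ℕ} {h : Pt → ℝ} (a : Fin 2) (hh : Good n h) :
    Good n (fun p => (xc a p / tc p) * h p) := by
  refine Good.mul_aux (fun p => xc a p / tc p) (fun i j k hk => ?_) hh
  fin_cases a
  · have e : (fun p : Pt => (xc 0 p / tc p) * mono i j k p) = mono (i + 1) j (k + 1) := by
      funext p
      simp only [xc, tc, mono, pow_succ, if_true, reduceIte]
      rw [div_mul_div_comm]; ring_nf
    exact e ▸ Good.ofMono (i + 1) j (k + 1) (by omega)
  · have e : (fun p : Pt => (xc 1 p / tc p) * mono i j k p) = mono i (j + 1) (k + 1) := by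
      funext p
      simp only [xc, tc, mono, pow_succ]
      norm_num
      rw [div_mul_div_comm]; ring_nf
    exact e ▸ Good.ofMono i (j + 1) (k + 1) (by omega)

lemma Good.lb {n : ℕ} {h : Pt → ℝ} (hh : Good n h) (a : Fin 2) :
    Good n (Lb a h) := by
  show Good n (fun p => xc a p * _root_.pd 0 h p + tc p * _root_.pd a.succ h p)
  exact Good.add (Good.mul_x a (hh.pd 0)) (Good.mul_t (hh.pd a.succ))

lemma Good.mul_mono0 {n : ℕ} {h : Pt → ℝ} (i0 j0 : ℕ) (hh : Good n h) :
    Good n (fun p => mono i0 j0 (i0 + j0) p * h p) := by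
  refine Good.mul_aux (mono i0 j0 (i0 + j0)) (fun i j k hk => ?_) hh
  have e : (fun p : Pt => mono i0 j0 (i0 + j0) p * mono i j k p)
      = mono (i0 + i) (j0 + j) (i0 + j0 + k) := by
    funext p
    simp only [mono, div_mul_div_comm, pow_add]
    ring
  exact e ▸ Good.ofMono (i0 + i) (j0 + j) (i0 + j0 + k) (by omega)

lemma K_rad_nonneg (p : Pt) : 0 ≤ rad p := Real.sqrt_nonneg _

lemma K_one_lt {p : Pt} (hp : p ∈ Kset) : 1 < p.1 := by
  have := K_rad_nonneg p
  have h2 : rad p + 1 < tc p := hp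
  simp only [tc] at h2
  linarith

lemma K_t_pos {p : Pt} (hp : p ∈ Kset) : 0 < p.1 := lt_trans one_pos (K_one_lt hp)

lemma K_t_ne {p : Pt} (hp : p ∈ Kset) : p.1 ≠ 0 := ne_of_gt (K_t_pos hp)

lemma K_absx1 {p : Pt} (hp : p ∈ Kset) : |p.2.1| ≤ p.1 := by
  have h1 : |p.2.1| ≤ rad p := by
    rw [← Real.sqrt_sq_eq_abs]
    exact Real.sqrt_le_sqrt (by nlinarith [sq_nonneg p.2.2])
  have h2 : rad p + 1 < tc p := hp
  simp only [tc] at h2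
  linarith

lemma K_absx2 {p : Pt} (hp : p ∈ Kset) : |p.2.2| ≤ p.1 := by
  have h1 : |p.2.2| ≤ rad p := by
    rw [← Real.sqrt_sq_eq_abs]
    exact Real.sqrt_le_sqrt (by nlinarith [sq_nonneg p.2.1])
  have h2 : rad p + 1 < tc p := hp
  simp only [tc] at h2
  linarith

lemma mono_bound {i j k n : ℕ} (hk : i + j + n ≤ k) {p : Pt} (hp : p ∈ Kset) :
    |mono i j k p| ≤ 1 / p.1 ^ n := by
  have ht1 : 1 ≤ p.1 := le_of_lt (K_one_lt hp)
  have ht0 : 0 < p.1 := K_t_pos hp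
  have habs : |mono i j k p| = |p.2.1| ^ i * |p.2.2| ^ j / p.1 ^ k := by
    rw [mono, abs_div, abs_mul, abs_pow, abs_pow, abs_pow, abs_of_pos ht0]
  rw [habs, div_le_div_iff₀ (pow_pos ht0 k) (pow_pos ht0 n)]
  calc |p.2.1| ^ i * |p.2.2| ^ j * p.1 ^ n
      ≤ p.1 ^ i * p.1 ^ j * p.1 ^ n := by
        gcongr <;> first
          | exact abs_nonneg _
          | exact K_absx1 hp
          | exact K_absx2 hp
    _ = p.1 ^ (i + j + n) := by rw [← pow_add, ← pow_add]
    _ ≤ p.1 ^ k := pow_le_pow_right₀ ht1 hk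
    _ = 1 * p.1 ^ k := (one_mul _).symm
  
lemma Good.bound {n : ℕ} {h : Pt → ℝ} (hh : Good n h) :
    ∃ C : ℝ, 0 ≤ C ∧ ∀ p ∈ Kset, |h p| ≤ C / p.1 ^ n := by
  induction hh with
  | zero =>
    exact ⟨0, le_refl 0, fun p hp => by
      simp [le_div_iff₀ (pow_pos (K_t_pos hp) n)]⟩
  | add hg₁ hg₂ ih₁ ih₂ =>
    obtain ⟨C₁, hC₁, hb₁⟩ := ih₁
    obtain ⟨C₂, hC₂, hb₂⟩ := ih₂
    refine ⟨C₁ + C₂, by linarith, fun p hp => ?_⟩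
    refine le_trans (abs_add_le _ _) ?_
    rw [add_div]
    exact add_le_add (hb₁ p hp) (hb₂ p hp)
  | smul c hg ih =>
    obtain ⟨C, hC, hb⟩ := ih
    refine ⟨|c| * C, mul_nonneg (abs_nonneg c) hC, fun p hp => ?_⟩
    rw [abs_mul, mul_div_assoc]
    exact mul_le_mul_of_nonneg_left (hb p hp) (abs_nonneg c)
  | ofMono i j k hk =>
    exact ⟨1, zero_le_one, fun p hp => mono_bound hk hp⟩
  | congr hg he ih =>
    obtain ⟨C, hC, hb⟩ := ih
    exact ⟨C, hC, fun p hp => by rw [← he p (K_t_ne hp)]; exact hb p hp⟩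

def m0 : Pt → ℝ := fun p => 1 - (p.2.1 ^ 2 + p.2.2 ^ 2) / p.1 ^ 2

lemma m0_eq_combo : m0 = fun p : Pt =>
    mono 0 0 0 p + (-1 : ℝ) * mono 2 0 2 p + (-1 : ℝ) * mono 0 2 2 p := by
  funext p; simp only [m0, mono]; ring

lemma good_m0 : Good 0 m0 := by
  rw [m0_eq_combo]
  exact Good.add (Good.add (Good.ofMono 0 0 0 le_rfl)
    (Good.smul (-1) (Good.ofMono 2 0 2 le_rfl))) (Good.smul (-1) (Good.ofMono 0 2 2 le_rfl))

lemma Good.mulm0 {g : Pt → ℝ} (hg : Good 0 g) : Good 0 (fun p => m0 p * g p) := by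
  have h1 : Good 0 (fun p => (1 : ℝ) * g p) := Good.smul 1 hg
  have h2 : Good 0 (fun p => (-1 : ℝ) * (mono 2 0 2 p * g p)) :=
    Good.smul (-1) (Good.mul_mono0 2 0 hg)
  have h3 : Good 0 (fun p => (-1 : ℝ) * (mono 0 2 2 p * g p)) :=
    Good.smul (-1) (Good.mul_mono0 0 2 hg)
  refine Good.congr (Good.add (Good.add h1 h2) h3) fun p hp => ?_
  simp only [mono, m0]
  ring

lemma pd_m0_eq (α : Fin 3) {p : Pt} (hp : p.1 ≠ 0) :
    pd α m0 p = pd α (mono 0 0 0) p + (-1 : ℝ) * pd α (mono 2 0 2) p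
      + (-1 : ℝ) * pd α (mono 0 2 2) p := by
  rw [pd_congrU (fun q _ => congrFun m0_eq_combo q) hp α]
  simp only [pd]
  have d1 := mono_diff 0 0 0 hp
  have d2 := mono_diff 2 0 2 hp
  have d3 := mono_diff 0 2 2 hp
  rw [fderiv_fun_add (f := fun q => mono 0 0 0 q + -1 * mono 2 0 2 q) (DifferentiableAt.add d1 (d2.const_mul (-1))) (d3.const_mul (-1)),
      fderiv_fun_add d1 (d2.const_mul (-1)), fderiv_const_mul d2 (-1), fderiv_const_mul d3 (-1)]
  simp

lemma pd0_m0 {p : Pt} (hp : p.1 ≠ 0) :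
    pd 0 m0 p = 2 * (p.2.1 ^ 2 + p.2.2 ^ 2) / p.1 ^ 3 := by
  rw [pd_m0_eq 0 hp, pd0_mono 0 0 0 hp, pd0_mono 2 0 2 hp, pd0_mono 0 2 2 hp]
  simp only [mono]
  field_simp
  ring

lemma pd1_m0 {p : Pt} (hp : p.1 ≠ 0) : pd 1 m0 p = -2 * p.2.1 / p.1 ^ 2 := by
  rw [pd_m0_eq 1 hp, pd1_mono 0 0 0 hp, pd1_mono 2 0 2 hp, pd1_mono 0 2 2 hp]
  simp only [mono]
  field_simp
  norm_num

lemma pd2_m0 {p : Pt} (hp : p.1 ≠ 0) : pd 2 m0 p = -2 * p.2.2 / p.1 ^ 2 := by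
  rw [pd_m0_eq 2 hp, pd2_mono 0 0 0 hp, pd2_mono 2 0 2 hp, pd2_mono 0 2 2 hp]
  simp only [mono]
  field_simp
  norm_num

lemma Lbm0_0 {p : Pt} (hp : p.1 ≠ 0) :
    xc 0 p * pd 0 m0 p + tc p * pd (0 : Fin 2).succ m0 p = -2 * (xc 0 p / tc p) * m0 p := by
  have hs : (0 : Fin 2).succ = 1 := rfl
  rw [hs, pd0_m0 hp, pd1_m0 hp]
  simp only [xc, tc, m0, if_pos rfl]
  simp only [if_true]
  field_simp
  ring

lemma Lbm0_1 {p : Pt} (hp : p.1 ≠ 0) :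
    xc 1 p * pd 0 m0 p + tc p * pd (1 : Fin 2).succ m0 p = -2 * (xc 1 p / tc p) * m0 p := by
  have hs : (1 : Fin 2).succ = 2 := rfl
  rw [hs, pd0_m0 hp, pd2_m0 hp]
  have hx : xc 1 p = p.2.2 := rfl
  rw [hx]
  simp only [tc, m0]
  field_simp
  ring

lemma Lbm0 (a : Fin 2) {p : Pt} (hp : p.1 ≠ 0) :
    xc a p * pd 0 m0 p + tc p * pd a.succ m0 p = -2 * (xc a p / tc p) * m0 p := by
  fin_cases a
  · exact Lbm0_0 hp
  · exact Lbm0_1 hp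

def GoodM (h : Pt → ℝ) : Prop :=
  ∃ g : Pt → ℝ, Good 0 g ∧ ∀ p : Pt, p.1 ≠ 0 → h p = m0 p * g p

lemma GoodM.lb {h : Pt → ℝ} (hh : GoodM h) (a : Fin 2) : GoodM (Lb a h) := by
  obtain ⟨g, hg, he⟩ := hh
  refine ⟨fun p => Lb a g p + (-2 : ℝ) * ((xc a p / tc p) * g p),
    Good.add (hg.lb a) (Good.smul (-2) (hg.mul_u a)), fun p hp => ?_⟩
  have e0 : pd 0 h p = pd 0 (fun q => m0 q * g q) p := pd_congrU he hp 0
  have ea : pd a.succ h p = pd a.succ (fun q => m0 q * g q) p := pd_congrU he hp a.succ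
  have dm : DifferentiableAt ℝ m0 p := good_m0.diff p hp
  have dg : DifferentiableAt ℝ g p := hg.diff p hp
  have prod : ∀ α : Fin 3, pd α (fun q => m0 q * g q) p
      = m0 p * pd α g p + g p * pd α m0 p := by
    intro α; simp only [pd]; rw [fderiv_fun_mul dm dg]; simp
  show xc a p * pd 0 h p + tc p * pd a.succ h p
      = m0 p * ((xc a p * pd 0 g p + tc p * pd a.succ g p) + (-2 : ℝ) * ((xc a p / tc p) * g p))
  rw [e0, ea, prod 0, prod a.succ]
  linear_combination g p * Lbm0 a hp

end NullAux

namespace NullAux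

lemma goodM_LbJ {h : Pt → ℝ} (hh : GoodM h) (J : List (Fin 2)) : GoodM (LbJ J h) := by
  induction J with
  | nil => exact hh
  | cons a J ih => exact ih.lb a

lemma good_pdI {n : ℕ} {h : Pt → ℝ} (hh : Good n h) (I : List (Fin 3)) :
    Good (n + I.length) (pdI I h) := by
  induction I with
  | nil => exact hh
  | cons α I ih => exact ih.pd α

lemma K_m0_frac {p : Pt} (hp : p ∈ Kset) :
    m0 p = (tc p ^ 2 - rad p ^ 2) / tc p ^ 2 := by
  have ht := K_t_pos hp
  have hr : rad p ^ 2 = p.2.1 ^ 2 + p.2.2 ^ 2 := Real.sq_sqrt (by positivity)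
  simp only [m0, tc, hr]
  field_simp

lemma K_m0_eq {p : Pt} (hp : p ∈ Kset) : m0 p = (sv p / tc p) ^ 2 := by
  have hK : rad p + 1 < tc p := hp
  have hr0 := K_rad_nonneg p
  have hsv : sv p ^ 2 = tc p ^ 2 - rad p ^ 2 :=
    Real.sq_sqrt (by nlinarith)
  rw [div_pow, hsv, K_m0_frac hp]

lemma K_m0_nonneg {p : Pt} (hp : p ∈ Kset) : 0 ≤ m0 p := by
  rw [K_m0_eq hp]; exact sq_nonneg _

lemma K_inv_le_m0 {p : Pt} (hp : p ∈ Kset) : 1 / tc p ≤ m0 p := by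
  have hK : rad p + 1 < tc p := hp
  have hr0 := K_rad_nonneg p
  have ht : (0 : ℝ) < tc p := K_t_pos hp
  rw [K_m0_frac hp, div_le_div_iff₀ ht (by positivity)]
  nlinarith [mul_pos (show (0:ℝ) < tc p - rad p - 1 by linarith)
    (show (0:ℝ) < tc p + rad p by linarith), ht, hr0, mul_pos ht ht]

lemma nullP00_eq (P : Fin 3 → Fin 3 → ℝ) (hPsymm : ∀ α β, P α β = P β α)
    (hPnull : ∀ ξ : Fin 3 → ℝ, ξ 0 ^ 2 = ξ 1 ^ 2 + ξ 2 ^ 2 →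
      ∑ α : Fin 3, ∑ β : Fin 3, P α β * ξ α * ξ β = 0) :
    ∀ p : Pt, p.1 ≠ 0 → nullP00 P p = m0 p * P 0 0 := by
  have E1 := hPnull ![1, 1, 0] (by norm_num [Matrix.cons_val_two, Matrix.tail_cons, Matrix.head_cons])
  have E2 := hPnull ![1, -1, 0] (by norm_num [Matrix.cons_val_two, Matrix.tail_cons, Matrix.head_cons])
  have E3 := hPnull ![1, 0, 1] (by norm_num [Matrix.cons_val_two, Matrix.tail_cons, Matrix.head_cons])
  have E4 := hPnull ![1, 0, -1] (by norm_num [Matrix.cons_val_two, Matrix.tail_cons, Matrix.head_cons])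
  have E5 := hPnull ![5, 3, 4] (by norm_num [Matrix.cons_val_two, Matrix.tail_cons, Matrix.head_cons])
  simp only [Fin.sum_univ_three, Matrix.cons_val_zero, Matrix.cons_val_one, Matrix.head_cons,
    Matrix.cons_val_two, Matrix.tail_cons] at E1 E2 E3 E4 E5
  have s10 : P 1 0 = P 0 1 := hPsymm 1 0
  have s20 : P 2 0 = P 0 2 := hPsymm 2 0
  have s21 : P 2 1 = P 1 2 := hPsymm 2 1
  have h01 : P 0 1 = 0 := by linarith
  have h02 : P 0 2 = 0 := by linarith
  have h11 : P 1 1 = -P 0 0 := by linarith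
  have h22 : P 2 2 = -P 0 0 := by linarith
  have h12 : P 1 2 = 0 := by linarith
  intro p hp
  have hs0 : (0 : Fin 2).succ = 1 := rfl
  have hs1 : (1 : Fin 2).succ = 2 := rfl
  simp only [nullP00, Fin.sum_univ_two, hs0, hs1, h01, h02, h11, h22, h12, s21]
  simp only [xc, tc, m0, if_pos rfl]
  norm_num
  field_simp
  ring

end NullAux

open NullAux

/-- Decay of the `(0,0)`-component of a null form in the
semi-hyperboloidal frame. -/
theorem null_form_decay (P : Fin 3 → Fin 3 → ℝ) (hPsymm : ∀ α β, P α β = P β α)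
    (hPnull : ∀ ξ : Fin 3 → ℝ, ξ 0 ^ 2 = ξ 1 ^ 2 + ξ 2 ^ 2 →
      ∑ α : Fin 3, ∑ β : Fin 3, P α β * ξ α * ξ β = 0)
    (I : List (Fin 3)) (J : List (Fin 2)) :
    ∃ C > 0,
      (∀ p ∈ Kset, |pdI I (LbJ J (nullP00 P)) p| ≤ C * (sv p / tc p) ^ 2) ∧
      (∀ p ∈ Kset, |nullP00 P p| ≤ C * ((tc p ^ 2 - rad p ^ 2) / tc p ^ 2)) := by
  have hid := nullP00_eq P hPsymm hPnull
  have hgood0 : Good 0 (fun _ : Pt => P 0 0) := by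
    refine Good.congr (Good.smul (P 0 0) (Good.ofMono 0 0 0 le_rfl)) fun p _ => ?_
    simp [mono]
  have hgm : GoodM (nullP00 P) := ⟨fun _ => P 0 0, hgood0, hid⟩
  obtain ⟨g, hg, he⟩ := goodM_LbJ hgm J
  have key : ∃ C0 : ℝ, 0 ≤ C0 ∧ ∀ p ∈ Kset, |pdI I (LbJ J (nullP00 P)) p| ≤ C0 * m0 p := by
    cases I with
    | nil =>
      obtain ⟨Cg, hCg0, hCg⟩ := hg.bound
      refine ⟨Cg, hCg0, fun p hp => ?_⟩
      have hb : |g p| ≤ Cg := by simpa using hCg p hp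
      have hEq : pdI [] (LbJ J (nullP00 P)) p = m0 p * g p := he p (K_t_ne hp)
      rw [hEq, abs_mul, abs_of_nonneg (K_m0_nonneg hp), mul_comm (m0 p) (|g p|)]
      exact mul_le_mul_of_nonneg_right hb (K_m0_nonneg hp)
    | cons α I' =>
      have hgood : Good 0 (LbJ J (nullP00 P)) :=
        Good.congr hg.mulm0 fun p hp => (he p hp).symm
      obtain ⟨C2, hC20, hC2⟩ := (good_pdI hgood (α :: I')).bound
      refine ⟨C2, hC20, fun p hp => ?_⟩
      have ht1 : 1 < p.1 := K_one_lt hp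
      have ht0 : 0 < p.1 := K_t_pos hp
      have hpow : p.1 ≤ p.1 ^ (0 + (α :: I').length) :=
        le_self_pow₀ (le_of_lt ht1) (by simp)
      calc |pdI (α :: I') (LbJ J (nullP00 P)) p|
          ≤ C2 / p.1 ^ (0 + (α :: I').length) := hC2 p hp
        _ ≤ C2 / p.1 := by gcongr
        _ = C2 * (1 / p.1) := by rw [mul_one_div]
        _ ≤ C2 * m0 p := mul_le_mul_of_nonneg_left (K_inv_le_m0 hp) hC20
  obtain ⟨C0, hC00, hC0⟩ := key
  refine ⟨C0 + |P 0 0| + 1, by positivity, fun p hp => ?_, fun p hp => ?_⟩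
  · rw [← K_m0_eq hp]
    calc |pdI I (LbJ J (nullP00 P)) p| ≤ C0 * m0 p := hC0 p hp
      _ ≤ (C0 + |P 0 0| + 1) * m0 p := by
          have := K_m0_nonneg hp
          nlinarith [abs_nonneg (P 0 0)]
  · rw [← K_m0_frac hp, hid p (K_t_ne hp), abs_mul, abs_of_nonneg (K_m0_nonneg hp)]
    have := K_m0_nonneg hp
    nlinarith [abs_nonneg (P 0 0), abs_nonneg (P 0 0)]
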